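/- Let u : B_ρ -> R be a C^2 function on the Euclidean ball B_ρ of radius ρ in R^{n-1}, whose graph satisfies an interior and exterior touching ball condition of radius ρ in R^n, with u(O)=0 and ∇u(O)=0. Then for every x in B_ρ one has |u(x)| <= ρ - sqrt(ρ^2 - |x|^2) and |∇u(x)| <= |x|/sqrt(ρ^2 - |x|^2). -/

import Mathlib

open Metric

variable {m : ℕ}

/-- The graph point `(x, u x)` in `ℝ^m × ℝ` with the Euclidean (`ℓ²`) norm. -/
noncomputable def graphPt (u : EuclideanSpace ℝ (Fin m) → ℝ)
    (x : EuclideanSpace ℝ (Fin m)) : WithLp 2 (EuclideanSpace ℝ (Fin m) × ℝ) :=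
  (WithLp.equiv 2 (EuclideanSpace ℝ (Fin m) × ℝ)).symm (x, u x)

/-- The (Euclidean) unit normal to the graph of `u` at `(x, u x)`. -/
noncomputable def graphNormal (u : EuclideanSpace ℝ (Fin m) → ℝ)
    (x : EuclideanSpace ℝ (Fin m)) : WithLp 2 (EuclideanSpace ℝ (Fin m) × ℝ) :=
  ((1 + ‖gradient u x‖ ^ 2) ^ (-(1:ℝ)/2)) •
    (WithLp.equiv 2 (EuclideanSpace ℝ (Fin m) × ℝ)).symm (-(gradient u x), 1)

open scoped RealInnerProductSpace

lemma avoid_coord (ρ : ℝ) (hρ : 0 < ρ) (u : EuclideanSpace ℝ (Fin m) → ℝ)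
    (htouch : ∀ x ∈ ball (0 : EuclideanSpace ℝ (Fin m)) ρ,
      (ball (graphPt u x + ρ • graphNormal u x) ρ ∩
          {p | ∃ y ∈ ball (0 : EuclideanSpace ℝ (Fin m)) ρ, p = graphPt u y} = ∅) ∧
      (ball (graphPt u x - ρ • graphNormal u x) ρ ∩
          {p | ∃ y ∈ ball (0 : EuclideanSpace ℝ (Fin m)) ρ, p = graphPt u y} = ∅))
    (x : EuclideanSpace ℝ (Fin m)) (hx : x ∈ ball (0 : EuclideanSpace ℝ (Fin m)) ρ)
    (y : EuclideanSpace ℝ (Fin m)) (hy : y ∈ ball (0 : EuclideanSpace ℝ (Fin m)) ρ) :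
    ρ^2 ≤ ‖y - (x - (ρ * (1 + ‖gradient u x‖ ^ 2) ^ (-(1:ℝ)/2)) • gradient u x)‖^2
        + (u y - (u x + ρ * (1 + ‖gradient u x‖ ^ 2) ^ (-(1:ℝ)/2)))^2 ∧
    ρ^2 ≤ ‖y - (x + (ρ * (1 + ‖gradient u x‖ ^ 2) ^ (-(1:ℝ)/2)) • gradient u x)‖^2
        + (u y - (u x - ρ * (1 + ‖gradient u x‖ ^ 2) ^ (-(1:ℝ)/2)))^2 := by
  obtain ⟨h1, h2⟩ := htouch x hx
  set c : ℝ := (1 + ‖gradient u x‖ ^ 2) ^ (-(1:ℝ)/2) with hc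
  have key : ∀ C : WithLp 2 (EuclideanSpace ℝ (Fin m) × ℝ),
      ball C ρ ∩ {p | ∃ y ∈ ball (0 : EuclideanSpace ℝ (Fin m)) ρ, p = graphPt u y} = ∅ →
      ρ^2 ≤ ‖y - C.fst‖^2 + (u y - C.snd)^2 := by
    intro C hC
    have hmem : graphPt u y ∈ {p | ∃ y ∈ ball (0 : EuclideanSpace ℝ (Fin m)) ρ, p = graphPt u y} :=
      ⟨y, hy, rfl⟩
    have hnot : graphPt u y ∉ ball C ρ := fun h => by
      have : graphPt u y ∈ (∅ : Set (WithLp 2 (EuclideanSpace ℝ (Fin m) × ℝ))) := hC ▸ ⟨h, hmem⟩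
      exact this
    have hd : ρ ≤ dist (graphPt u y) C := le_of_not_gt (fun h => hnot (mem_ball.2 h))
    have hd2 : ρ^2 ≤ (dist (graphPt u y) C)^2 := by
      have := dist_nonneg (x := graphPt u y) (y := C); nlinarith
    calc ρ^2 ≤ (dist (graphPt u y) C)^2 := hd2
      _ = ‖graphPt u y - C‖^2 := by rw [dist_eq_norm]
      _ = ‖(graphPt u y - C).fst‖^2 + ((graphPt u y - C).snd)^2 := by
          rw [WithLp.prod_norm_sq_eq_of_L2]; norm_num
      _ = ‖y - C.fst‖^2 + (u y - C.snd)^2 := by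
          rw [WithLp.sub_fst, WithLp.sub_snd]
          simp [graphPt]
  constructor
  · have := key _ h1
    have hfst : (graphPt u x + ρ • graphNormal u x).fst
        = x - (ρ * c) • gradient u x := by
      rw [WithLp.add_fst, WithLp.smul_fst]
      simp [graphPt, graphNormal, smul_smul, sub_eq_add_neg, hc]
    have hsnd : (graphPt u x + ρ • graphNormal u x).snd = u x + ρ * c := by
      rw [WithLp.add_snd, WithLp.smul_snd]
      simp [graphPt, graphNormal, smul_smul, hc]
    rwa [hfst, hsnd] at this
  · have := key _ h2
    have hfst : (graphPt u x - ρ • graphNormal u x).fst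
        = x + (ρ * c) • gradient u x := by
      rw [WithLp.sub_fst, WithLp.smul_fst]
      simp [graphPt, graphNormal, smul_smul, sub_eq_add_neg, hc]
    have hsnd : (graphPt u x - ρ • graphNormal u x).snd = u x - ρ * c := by
      rw [WithLp.sub_snd, WithLp.smul_snd]
      simp [graphPt, graphNormal, smul_smul, hc]
    rwa [hfst, hsnd] at this

lemma ivt_helper' (f R : ℝ → ℝ) (hf : ContinuousOn f (Set.Icc 0 1))
    (hR : ContinuousOn R (Set.Icc 0 1))
    (hpos : ∀ t ∈ Set.Icc (0:ℝ) 1, 0 < R t)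
    (halt : ∀ t ∈ Set.Icc (0:ℝ) 1, 0 ≤ f t ∨ f t ≤ -(2 * R t))
    (h0 : 0 ≤ f 0) : 0 ≤ f 1 := by
  rcases halt 1 (by norm_num) with h | h
  · exact h
  · exfalso
    set φ : ℝ → ℝ := fun t => f t + R t with hφ
    have hφc : ContinuousOn φ (Set.Icc 0 1) := hf.add hR
    have hφ0 : 0 < φ 0 := by
      have := hpos 0 (by norm_num); simp only [hφ]; linarith
    have hφ1 : φ 1 < 0 := by
      have := hpos 1 (by norm_num); simp only [hφ]; linarith
    have : (0:ℝ) ∈ Set.Icc (φ 1) (φ 0) := ⟨hφ1.le, hφ0.le⟩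
    obtain ⟨t, ht, hteq⟩ := intermediate_value_Icc' (by norm_num : (0:ℝ) ≤ 1) hφc this
    rcases halt t ht with h' | h'
    · have := hpos t ht; simp only [hφ] at hteq; linarith
    · have := hpos t ht; simp only [hφ] at hteq; linarith

lemma height_bound (ρ : ℝ) (hρ : 0 < ρ) (u : EuclideanSpace ℝ (Fin m) → ℝ)
    (hu : ContinuousOn u (ball (0 : EuclideanSpace ℝ (Fin m)) ρ))
    (hu0 : u 0 = 0)
    (havoid : ∀ y ∈ ball (0 : EuclideanSpace ℝ (Fin m)) ρ,
      ρ^2 ≤ ‖y‖^2 + (u y - ρ)^2 ∧ ρ^2 ≤ ‖y‖^2 + (u y + ρ)^2) :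
    ∀ x ∈ ball (0 : EuclideanSpace ℝ (Fin m)) ρ,
      |u x| ≤ ρ - Real.sqrt (ρ^2 - ‖x‖^2) := by
  intro x hx
  have hxρ : ‖x‖ < ρ := by simpa [mem_ball, dist_eq_norm] using hx
  set γ : ℝ → EuclideanSpace ℝ (Fin m) := fun t => t • x with hγ
  have hmem : ∀ t ∈ Set.Icc (0:ℝ) 1, γ t ∈ ball (0 : EuclideanSpace ℝ (Fin m)) ρ := by
    intro t ht
    simp only [mem_ball, dist_eq_norm, sub_zero, hγ]
    calc ‖t • x‖ = |t| * ‖x‖ := by rw [norm_smul, Real.norm_eq_abs]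
      _ ≤ 1 * ‖x‖ := by
          apply mul_le_mul_of_nonneg_right _ (norm_nonneg x)
          rw [abs_le]; constructor <;> [linarith [ht.1]; exact ht.2]
      _ < ρ := by simpa using hxρ
  set R : ℝ → ℝ := fun t => Real.sqrt (ρ^2 - ‖γ t‖^2) with hR
  have hγc : Continuous γ := continuous_id.smul continuous_const
  have hRc : ContinuousOn R (Set.Icc 0 1) :=
    (continuous_const.sub ((hγc.norm).pow 2)).sqrt.continuousOn
  have hRpos : ∀ t ∈ Set.Icc (0:ℝ) 1, 0 < R t := by
    intro t ht
    apply Real.sqrt_pos.2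
    have := hmem t ht
    simp only [mem_ball, dist_eq_norm, sub_zero] at this
    nlinarith [norm_nonneg (γ t)]
  have hRsq : ∀ t ∈ Set.Icc (0:ℝ) 1, (R t)^2 = ρ^2 - ‖γ t‖^2 := by
    intro t ht
    apply Real.sq_sqrt
    have := hmem t ht
    simp only [mem_ball, dist_eq_norm, sub_zero] at this
    nlinarith [norm_nonneg (γ t)]
  have hγ0 : γ 0 = 0 := by simp [hγ]
  have hγ1 : γ 1 = x := by simp [hγ]
  have hR0 : R 0 = ρ := by rw [hR]; simp [hγ0, Real.sqrt_sq hρ.le]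
  have huc : ContinuousOn (fun t => u (γ t)) (Set.Icc 0 1) :=
    hu.comp hγc.continuousOn hmem
  -- upper bound
  have hup : u x ≤ ρ - R 1 := by
    have := ivt_helper' (fun t => ρ - u (γ t) - R t) R
      ((continuousOn_const.sub huc).sub hRc) hRc hRpos
      (by
        intro t ht
        have h := (havoid (γ t) (hmem t ht)).1
        have hsq := hRsq t ht
        have : (R t)^2 ≤ (u (γ t) - ρ)^2 := by nlinarith
        rcases le_or_gt (u (γ t)) (ρ - R t) with h' | h'
        · left; linarith
        · right
          have hpos := hRpos t ht
          nlinarith)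
      (by simp [hγ0, hu0, hR0])
    simp only [hγ1] at this
    linarith
  have hlo : -(u x) ≤ ρ - R 1 := by
    have := ivt_helper' (fun t => ρ + u (γ t) - R t) R
      ((continuousOn_const.add huc).sub hRc) hRc hRpos
      (by
        intro t ht
        have h := (havoid (γ t) (hmem t ht)).2
        have hsq := hRsq t ht
        have : (R t)^2 ≤ (u (γ t) + ρ)^2 := by nlinarith
        rcases le_or_gt (-(u (γ t))) (ρ - R t) with h' | h'
        · left; linarith
        · right
          have hpos := hRpos t ht
          nlinarith)
      (by simp [hγ0, hu0, hR0])
    simp only [hγ1] at this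
    linarith
  have : R 1 = Real.sqrt (ρ^2 - ‖x‖^2) := by simp only [hR, hγ1]
  rw [abs_le]
  constructor <;> [linarith; linarith]

set_option maxHeartbeats 1000000 in
lemma squeeze (ρ : ℝ) (hρ : 0 < ρ) (u : EuclideanSpace ℝ (Fin m) → ℝ)
    (hu : ContinuousOn u (ball (0 : EuclideanSpace ℝ (Fin m)) ρ))
    (x : EuclideanSpace ℝ (Fin m)) (hx : x ∈ ball (0 : EuclideanSpace ℝ (Fin m)) ρ)
    (a : EuclideanSpace ℝ (Fin m)) (b P : ℝ) (hP : 0 < P)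
    (hW : ‖x - a‖^2 + P^2 = ρ^2)
    (htan : u x = b + P)
    (havoid : ∀ z ∈ ball (0 : EuclideanSpace ℝ (Fin m)) ρ,
      ρ^2 ≤ ‖z - a‖^2 + (u z - b)^2)
    (hheight : ∀ z ∈ ball (0 : EuclideanSpace ℝ (Fin m)) ρ,
      u z ≤ ρ - Real.sqrt (ρ^2 - ‖z‖^2))
    (hclose : ‖a‖^2 + (b - ρ)^2 < 4 * ρ^2) : False := by
  have hxρ : ‖x‖ < ρ := by simpa [mem_ball, dist_eq_norm] using hx
  have hbρ : b < ρ := by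
    have h1 := hheight x hx
    have h2 : 0 ≤ Real.sqrt (ρ^2 - ‖x‖^2) := Real.sqrt_nonneg _
    linarith
  set y : EuclideanSpace ℝ (Fin m) := (1/2 : ℝ) • a with hy
  have hya : ‖y - a‖ = ‖a‖ / 2 := by
    have h : y - a = ((1/2 : ℝ) - 1) • a := by rw [hy, sub_smul, one_smul]
    rw [h, norm_smul, Real.norm_eq_abs, show ((1:ℝ)/2 - 1) = -(1/2) by norm_num,
      abs_neg, abs_of_nonneg (by norm_num : (0:ℝ) ≤ 1/2)]
    ring
  have hynorm : ‖y‖ = ‖a‖ / 2 := by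
    rw [hy, norm_smul, Real.norm_eq_abs, abs_of_nonneg (by norm_num : (0:ℝ) ≤ 1/2)]; ring
  have hyball : y ∈ ball (0 : EuclideanSpace ℝ (Fin m)) ρ := by
    simp only [mem_ball, dist_eq_norm, sub_zero, hynorm]
    nlinarith [norm_nonneg a]
  have hyaρ : ‖y - a‖ < ρ := by rw [hya]; nlinarith [norm_nonneg a]
  have hxaρ : ‖x - a‖ < ρ := by nlinarith [norm_nonneg (x - a)]
  -- the path
  set γ : ℝ → EuclideanSpace ℝ (Fin m) := fun t => x + t • (y - x) with hγ
  have hγcvx : ∀ t ∈ Set.Icc (0:ℝ) 1, γ t = (1 - t) • x + t • y := by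
    intro t _; simp only [hγ]; rw [smul_sub, sub_smul, one_smul]; abel
  have hmem : ∀ t ∈ Set.Icc (0:ℝ) 1, γ t ∈ ball (0 : EuclideanSpace ℝ (Fin m)) ρ := by
    intro t ht
    rw [mem_ball, dist_eq_norm, sub_zero, hγcvx t ht]
    calc ‖(1 - t) • x + t • y‖ ≤ ‖(1 - t) • x‖ + ‖t • y‖ := norm_add_le _ _
      _ = (1 - t) * ‖x‖ + t * ‖y‖ := by
          rw [norm_smul, norm_smul, Real.norm_eq_abs, Real.norm_eq_abs,
            abs_of_nonneg (by linarith [ht.2]), abs_of_nonneg ht.1]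
      _ < ρ := by
          have h1 := ht.1; have h2 := ht.2
          have hyn : ‖y‖ < ρ := by
            have := hyball
            simpa [mem_ball, dist_eq_norm] using this
          have hM : max ‖x‖ ‖y‖ < ρ := max_lt hxρ hyn
          have k1 := mul_le_mul_of_nonneg_left (le_max_left ‖x‖ ‖y‖) (by linarith : (0:ℝ) ≤ 1 - t)
          have k2 := mul_le_mul_of_nonneg_left (le_max_right ‖x‖ ‖y‖) h1
          nlinarith
  have hmema : ∀ t ∈ Set.Icc (0:ℝ) 1, ‖γ t - a‖ < ρ := by
    intro t ht
    have : γ t - a = (1 - t) • (x - a) + t • (y - a) := by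
      simp only [hγ]; rw [smul_sub, sub_smul, one_smul, smul_sub, smul_sub]; abel
    rw [this]
    calc ‖(1 - t) • (x - a) + t • (y - a)‖ ≤ ‖(1 - t) • (x - a)‖ + ‖t • (y - a)‖ := norm_add_le _ _
      _ = (1 - t) * ‖x - a‖ + t * ‖y - a‖ := by
          rw [norm_smul, norm_smul, Real.norm_eq_abs, Real.norm_eq_abs,
            abs_of_nonneg (by linarith [ht.2]), abs_of_nonneg ht.1]
      _ < ρ := by
          have h1 := ht.1; have h2 := ht.2
          have hM : max ‖x - a‖ ‖y - a‖ < ρ := max_lt hxaρ hyaρ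
          have k1 := mul_le_mul_of_nonneg_left (le_max_left ‖x - a‖ ‖y - a‖) (by linarith : (0:ℝ) ≤ 1 - t)
          have k2 := mul_le_mul_of_nonneg_left (le_max_right ‖x - a‖ ‖y - a‖) h1
          nlinarith
  set R : ℝ → ℝ := fun t => Real.sqrt (ρ^2 - ‖γ t - a‖^2) with hRdef
  have hγc : Continuous γ := continuous_const.add (continuous_id.smul continuous_const)
  have hRc : ContinuousOn R (Set.Icc 0 1) :=
    (continuous_const.sub (((hγc.sub continuous_const).norm).pow 2)).sqrt.continuousOn
  have hRpos : ∀ t ∈ Set.Icc (0:ℝ) 1, 0 < R t := by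
    intro t ht
    apply Real.sqrt_pos.2
    nlinarith [hmema t ht, norm_nonneg (γ t - a)]
  have hRsq : ∀ t ∈ Set.Icc (0:ℝ) 1, (R t)^2 = ρ^2 - ‖γ t - a‖^2 := by
    intro t ht
    apply Real.sq_sqrt
    nlinarith [hmema t ht, norm_nonneg (γ t - a)]
  have hγ0 : γ 0 = x := by simp [hγ]
  have hγ1 : γ 1 = y := by simp [hγ]
  have hR0 : R 0 = P := by
    simp only [hRdef, hγ0]
    rw [show ρ^2 - ‖x - a‖^2 = P^2 by linarith, Real.sqrt_sq hP.le]
  have huc : ContinuousOn (fun t => u (γ t)) (Set.Icc 0 1) :=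
    hu.comp hγc.continuousOn hmem
  have key : 0 ≤ u y - b - R 1 := by
    have := ivt_helper' (fun t => u (γ t) - b - R t) R
      ((huc.sub continuousOn_const).sub hRc) hRc hRpos
      (by
        intro t ht
        have h := havoid (γ t) (hmem t ht)
        have hsq := hRsq t ht
        have h2 : (R t)^2 ≤ (u (γ t) - b)^2 := by nlinarith
        rcases le_or_gt (R t) (u (γ t) - b) with h' | h'
        · left; linarith
        · right
          have hpos := hRpos t ht
          nlinarith)
      (by simp only [hγ0, hR0, htan]; norm_num)
    simpa only [hγ1] using this
  -- contradiction
  have hR1sq : (R 1)^2 = ρ^2 - ‖y - a‖^2 := by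
    have := hRsq 1 (by norm_num); rwa [hγ1] at this
  set t0 : ℝ := (b + ρ)/2 with ht0
  have h1 : t0 - b < R 1 := by
    have hpos : 0 < R 1 := hRpos 1 (by norm_num)
    have : (t0 - b)^2 < (R 1)^2 := by
      rw [hR1sq, hya, ht0]
      nlinarith
    nlinarith
  have h2 : ρ - t0 < Real.sqrt (ρ^2 - ‖y‖^2) := by
    apply lt_of_pow_lt_pow_left₀ 2 (Real.sqrt_nonneg _)
    rw [Real.sq_sqrt (by nlinarith [hyball, hynorm, norm_nonneg a] : (0:ℝ) ≤ ρ^2 - ‖y‖^2)]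
    rw [hynorm, ht0]
    nlinarith
  have h3 := hheight y hyball
  linarith

set_option maxHeartbeats 2000000

/-- If the graph of a `C²` function `u : B_ρ → ℝ` with `u(O)=0`,
`∇u(O)=0` satisfies an interior and exterior touching ball condition of radius `ρ`
(the open balls of radius `ρ` centered at `graphPt ± ρ • normal` miss the graph),
then `|u(x)| ≤ ρ - √(ρ² - |x|²)` and `|∇u(x)| ≤ |x|/√(ρ² - |x|²)` on `B_ρ`. -/
theorem graph_touching_ball_estimates (m : ℕ) (ρ : ℝ) (hρ : 0 < ρ)
    (u : EuclideanSpace ℝ (Fin m) → ℝ)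
    (hu : ContDiffOn ℝ 2 u (ball (0 : EuclideanSpace ℝ (Fin m)) ρ))
    (hu0 : u 0 = 0) (hgrad0 : gradient u 0 = 0)
    (htouch : ∀ x ∈ ball (0 : EuclideanSpace ℝ (Fin m)) ρ,
      (ball (graphPt u x + ρ • graphNormal u x) ρ ∩
          {p | ∃ y ∈ ball (0 : EuclideanSpace ℝ (Fin m)) ρ, p = graphPt u y} = ∅) ∧
      (ball (graphPt u x - ρ • graphNormal u x) ρ ∩
          {p | ∃ y ∈ ball (0 : EuclideanSpace ℝ (Fin m)) ρ, p = graphPt u y} = ∅)) :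
    ∀ x ∈ ball (0 : EuclideanSpace ℝ (Fin m)) ρ,
      |u x| ≤ ρ - Real.sqrt (ρ ^ 2 - ‖x‖ ^ 2) ∧
      ‖gradient u x‖ ≤ ‖x‖ / Real.sqrt (ρ ^ 2 - ‖x‖ ^ 2) := by
  have hcont : ContinuousOn u (ball (0 : EuclideanSpace ℝ (Fin m)) ρ) :=
    hu.continuousOn
  have havq := avoid_coord ρ hρ u htouch
  have h0av : ∀ y ∈ ball (0 : EuclideanSpace ℝ (Fin m)) ρ,
      ρ^2 ≤ ‖y‖^2 + (u y - ρ)^2 ∧ ρ^2 ≤ ‖y‖^2 + (u y + ρ)^2 := by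
    intro y hy
    have := havq 0 (mem_ball_self hρ) y hy
    rw [hgrad0] at this
    simpa [hu0, Real.one_rpow] using this
  have hheight := height_bound ρ hρ u hcont hu0 h0av
  intro x hx
  have hxρ : ‖x‖ < ρ := by simpa [mem_ball, dist_eq_norm] using hx
  refine ⟨hheight x hx, ?_⟩
  by_contra hcon
  push_neg at hcon
  obtain ⟨g, hg⟩ : ∃ g, gradient u x = g := ⟨_, rfl⟩
  obtain ⟨d, hd⟩ : ∃ d, Real.sqrt (ρ ^ 2 - ‖x‖ ^ 2) = d := ⟨_, rfl⟩
  rw [hg, hd] at hcon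
  have hd2 : d^2 = ρ^2 - ‖x‖^2 := by
    rw [← hd]; exact Real.sq_sqrt (by nlinarith [norm_nonneg x])
  have hdpos : 0 < d := by
    rw [← hd]; exact Real.sqrt_pos.2 (by nlinarith [norm_nonneg x])
  have hGd : ‖x‖ < d * ‖g‖ := by
    rw [div_lt_iff₀ hdpos] at hcon; linarith
  have hz : (0:ℝ) < 1 + ‖g‖^2 := by positivity
  obtain ⟨c, hc⟩ : ∃ c, (1 + ‖g‖^2) ^ (-(1:ℝ)/2) = c := ⟨_, rfl⟩
  have hcpos : 0 < c := by rw [← hc]; exact Real.rpow_pos_of_pos hz _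
  have hc2 : c^2 * (1 + ‖g‖^2) = 1 := by
    rw [← hc, ← Real.rpow_natCast ((1 + ‖g‖^2) ^ (-(1:ℝ)/2)) 2, ← Real.rpow_mul hz.le]
    norm_num
    rw [Real.rpow_neg_one]
    exact inv_mul_cancel₀ hz.ne'
  obtain ⟨P, hP⟩ : ∃ P, ρ * c = P := ⟨_, rfl⟩
  have hPpos : 0 < P := by rw [← hP]; exact mul_pos hρ hcpos
  have hPW : P^2 * (1 + ‖g‖^2) = ρ^2 := by
    rw [← hP, mul_pow, mul_assoc, hc2]; ring
  have hPd : P < d := by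
    have h1 : ρ^2 < d^2 * (1 + ‖g‖^2) := by
      have : ‖x‖^2 < d^2 * ‖g‖^2 := by
        nlinarith [norm_nonneg x, mul_nonneg hdpos.le (norm_nonneg g)]
      nlinarith
    have h2 : P^2 < d^2 := by nlinarith [hz, h1, hPW]
    nlinarith [h2, hPpos, hdpos]
  have habs : |u x| ≤ ρ - d := by rw [← hd]; exact hheight x hx
  have hu1 : u x ≤ ρ - d := (abs_le.1 habs).2
  have hu2 : -(ρ - d) ≤ u x := (abs_le.1 habs).1
  have hsm : ‖P • g‖^2 = P^2 * ‖g‖^2 := by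
    rw [norm_smul, mul_pow, Real.norm_eq_abs, sq_abs]
  have hsm' : P ^ 2 * ‖g‖ ^ 2 = ρ^2 - P^2 := by linear_combination hPW
  have havC : ∀ z ∈ ball (0 : EuclideanSpace ℝ (Fin m)) ρ,
      ρ^2 ≤ ‖z - (x - P • g)‖^2 + (u z - (u x + P))^2 ∧
      ρ^2 ≤ ‖z - (x + P • g)‖^2 + (u z - (u x - P))^2 := by
    intro z hz'
    have h := havq x hx z hz'
    rw [hg, hc, hP] at h
    exact h
  have hdρ2 : 0 < ρ * (d - P) := mul_pos hρ (sub_pos.2 hPd)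
  rcases le_or_gt (u x * (ρ + P) - P * ⟪x, g⟫) 0 with hK | hK
  · -- interior (upper) ball dips into lower sphere: squeeze with -u
    refine squeeze ρ hρ (fun z => -u z) hcont.neg x hx (x - P • g) (-(u x) - P) P hPpos
      ?_ (by ring) ?_ ?_ ?_
    · have h : x - (x - P • g) = P • g := by abel
      rw [h, hsm]; linear_combination hPW
    · intro z hz'
      have h := (havC z hz').1
      rw [show (-u z - (-(u x) - P)) = -(u z - (u x + P)) by ring, neg_sq]
      exact h
    · intro z hz'
      have h := (abs_le.1 (hheight z hz')).1
      linarith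
    · have hexp : ‖x - P • g‖^2 = ‖x‖^2 - 2*(P*⟪x, g⟫) + (ρ^2 - P^2) := by
        rw [norm_sub_sq_real, real_inner_smul_right, hsm, hsm']
      have e2 : (-(u x) - P - ρ)^2 = (u x)^2 + (P + ρ)^2 + 2*(u x * (ρ + P)) := by ring
      rw [hexp, e2]
      nlinarith [hdρ2, hd2, hu1, hu2, hK, hPd, hPpos, hdpos, hρ]
  · -- exterior (lower) ball dips into upper sphere: squeeze with u
    have hheight' : ∀ z ∈ ball (0 : EuclideanSpace ℝ (Fin m)) ρ,
        u z ≤ ρ - Real.sqrt (ρ^2 - ‖z‖^2) :=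
      fun z hz' => (abs_le.1 (hheight z hz')).2
    refine squeeze ρ hρ u hcont x hx (x + P • g) (u x - P) P hPpos
      ?_ (by ring) ?_ hheight' ?_
    · have h : x - (x + P • g) = -(P • g) := by abel
      rw [h, norm_neg, hsm]; linear_combination hPW
    · intro z hz'
      exact (havC z hz').2
    · have hexp : ‖x + P • g‖^2 = ‖x‖^2 + 2*(P*⟪x, g⟫) + (ρ^2 - P^2) := by
        rw [norm_add_sq_real, real_inner_smul_right, hsm, hsm']
      have e2 : (u x - P - ρ)^2 = (u x)^2 + (P + ρ)^2 - 2*(u x * (ρ + P)) := by ring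
      rw [hexp, e2]
      nlinarith [hdρ2, hd2, hu1, hu2, hK, hPd, hPpos, hdpos, hρ]
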